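/- arXiv:2103.14836 — 5 statements merged into one kernel-verified Lean document; each statement's English description precedes it below -/
import Mathlib

section
/- Fix L ∈ (0,1], ε > 0, θ ∈ (0, π/4], and define recursively γ₁ = (1+ε)(1-cos θ)/(L sin θ) and, as long as γ_{k-1} ∈ (0,1), γ_k = (1+ε)(2^{k-1} - cos θ ∏_{j=1}^{k-1}(1+√(1-γ_j²)))/(L sin θ). Then whenever γ₁,…,γ_k are all in (0,1), the sequence is strictly increasing: γ₁ < γ₂ < ⋯ < γ_k. -/
open Real

/-- The recursively defined sharpness sequence
`γ₁ = (1+ε)(1-cos θ)/(L sin θ)`,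
`γ_m = (1+ε)(2^{m-1} - cos θ ∏_{j=1}^{m-1}(1+√(1-γ_j²)))/(L sin θ)` for `2 ≤ m`,
is strictly increasing as long as all its terms lie in `(0,1)`. -/
theorem gamma_sequence_strict_increasing
    (L ε θ : ℝ) (hL0 : 0 < L) (hL1 : L ≤ 1) (hε : 0 < ε)
    (hθ : θ ∈ Set.Ioc 0 (π / 4))
    (k : ℕ) (γ : ℕ → ℝ)
    (h1 : γ 1 = (1 + ε) * (1 - Real.cos θ) / (L * Real.sin θ))
    (hrec : ∀ m, 2 ≤ m → m ≤ k →
      γ m = (1 + ε) *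
        ((2 : ℝ) ^ (m - 1) -
          Real.cos θ * ∏ j ∈ Finset.Icc 1 (m - 1), (1 + Real.sqrt (1 - γ j ^ 2))) /
        (L * Real.sin θ))
    (hIoo : ∀ m, 1 ≤ m → m ≤ k → γ m ∈ Set.Ioo (0 : ℝ) 1) :
    ∀ m, 1 ≤ m → m < k → γ m < γ (m + 1) := by
  intro m hm hmk
  obtain ⟨n, rfl⟩ : ∃ n, m = n + 1 := ⟨m - 1, (Nat.succ_pred_eq_of_pos hm).symm⟩
  have hθ0 := hθ.1
  have hθ1 := hθ.2
  have hsin : 0 < Real.sin θ := Real.sin_pos_of_pos_of_lt_pi hθ0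
    (lt_of_le_of_lt hθ1 (by linarith [Real.pi_pos]))
  have hD : 0 < L * Real.sin θ := mul_pos hL0 hsin
  have hcos1 : Real.cos θ < 1 := by
    have := Real.cos_lt_cos_of_nonneg_of_le_pi (le_refl 0)
      (le_trans hθ1 (by linarith [Real.pi_pos])) hθ0
    simpa using this
  have hcos0 : 0 < Real.cos θ := Real.cos_pos_of_mem_Ioo
    ⟨by linarith [Real.pi_pos], by linarith [Real.pi_pos]⟩
  -- formula for γ (n+1)
  have hf1 : γ (n + 1) = (1 + ε) *
      ((2 : ℝ) ^ n -
        Real.cos θ * ∏ j ∈ Finset.Icc 1 n, (1 + Real.sqrt (1 - γ j ^ 2))) /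
      (L * Real.sin θ) := by
    cases n with
    | zero => simpa using h1
    | succ p =>
        have := hrec (p + 2) (by omega) (by omega)
        simpa using this
  have hf2 : γ (n + 2) = (1 + ε) *
      ((2 : ℝ) ^ (n + 1) -
        Real.cos θ * ∏ j ∈ Finset.Icc 1 (n + 1), (1 + Real.sqrt (1 - γ j ^ 2))) /
      (L * Real.sin θ) := by
    have := hrec (n + 2) (by omega) (by omega)
    simpa using this
  have hprod : (∏ j ∈ Finset.Icc 1 (n + 1), (1 + Real.sqrt (1 - γ j ^ 2)))
      = (∏ j ∈ Finset.Icc 1 n, (1 + Real.sqrt (1 - γ j ^ 2)))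
        * (1 + Real.sqrt (1 - γ (n + 1) ^ 2)) := by
    exact Finset.prod_Icc_succ_top (by omega) _
  -- bounds on factors
  have hfac : ∀ j ∈ Finset.Icc 1 n, (1 : ℝ) ≤ 1 + Real.sqrt (1 - γ j ^ 2) ∧
      1 + Real.sqrt (1 - γ j ^ 2) ≤ 2 := by
    intro j hj
    simp only [Finset.mem_Icc] at hj
    obtain ⟨h0, h1'⟩ := hIoo j hj.1 (by omega)
    constructor
    · nlinarith [Real.sqrt_nonneg (1 - γ j ^ 2)]
    · have : Real.sqrt (1 - γ j ^ 2) ≤ 1 := Real.sqrt_le_one.mpr (by nlinarith)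
      linarith
  set P := ∏ j ∈ Finset.Icc 1 n, (1 + Real.sqrt (1 - γ j ^ 2)) with hP
  have hP0 : (0 : ℝ) < P :=
    Finset.prod_pos (fun j hj => by linarith [(hfac j hj).1])
  have hPle : P ≤ 2 ^ n := by
    calc P ≤ ∏ j ∈ Finset.Icc 1 n, (2 : ℝ) :=
          Finset.prod_le_prod (fun j hj => by linarith [(hfac j hj).1])
            (fun j hj => (hfac j hj).2)
    _ = 2 ^ n := by rw [Finset.prod_const, Nat.card_Icc]; norm_num
  obtain ⟨hg0, hg1⟩ := hIoo (n + 1) (by omega) (by omega)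
  set s := Real.sqrt (1 - γ (n + 1) ^ 2) with hs
  have hs0 : 0 < s := Real.sqrt_pos.mpr (by nlinarith)
  have hs1 : s < 1 := (Real.sqrt_lt' one_pos).mpr (by nlinarith)
  -- key numerator inequality
  have hkey : Real.cos θ * (P * s) < 2 ^ n := by
    have h1' : Real.cos θ * (P * s) < 1 * (P * s) := by
      have : 0 < P * s := mul_pos hP0 hs0
      nlinarith
    have h2' : P * s ≤ 2 ^ n * 1 := mul_le_mul hPle (le_of_lt hs1) (le_of_lt hs0)
      (by positivity)
    nlinarith
  rw [hf1, hf2, hprod]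
  have hnum : ((2 : ℝ) ^ n - Real.cos θ * P)
      < (2 : ℝ) ^ (n + 1) - Real.cos θ * (P * (1 + s)) := by
    ring_nf
    nlinarith [hkey]
  have h1ε : (0:ℝ) < 1 + ε := by linarith
  have := mul_lt_mul_of_pos_left hnum h1ε
  exact div_lt_div_of_pos_right this hD
end

section
/- Fix L ∈ (0,1] and ε > 0, and define the recursive sequence γ_k(θ) as: γ₁(θ) = (1+ε)(1-cos θ)/(L sin θ), and γ_k(θ) = (1+ε)(2^{k-1} - cos θ ∏_{j=1}^{k-1}(1+√(1-γ_j(θ)²)))/(L sin θ) when all previous terms lie in (0,1). Then for every n ∈ ℕ, lim_{θ→0⁺} γ_n(θ) = 0. -/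
open Real Filter

/-- Weierstrass product inequality. -/
lemma weier_aux (T : Finset ℕ) (f : ℕ → ℝ) (h : ∀ i ∈ T, 0 ≤ f i ∧ f i ≤ 1) :
    1 - ∑ i ∈ T, f i ≤ ∏ i ∈ T, (1 - f i) := by
  classical
  induction T using Finset.induction_on with
  | empty => simp
  | @insert a T ha ih =>
    have hmem : ∀ i ∈ T, 0 ≤ f i ∧ f i ≤ 1 := fun i hi => h i (Finset.mem_insert_of_mem hi)
    have hih := ih hmem
    have ha0 : 0 ≤ f a := (h a (Finset.mem_insert_self a T)).1
    have ha1 : f a ≤ 1 := (h a (Finset.mem_insert_self a T)).2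
    rw [Finset.sum_insert ha, Finset.prod_insert ha]
    have hsum : 0 ≤ ∑ i ∈ T, f i := Finset.sum_nonneg fun i hi => (hmem i hi).1
    nlinarith [hih, mul_nonneg ha0 hsum]

set_option maxHeartbeats 1000000 in
/-- For the family `γ_n(θ)` defined recursively by
`γ₁(θ) = (1+ε)(1-cos θ)/(L sin θ)` and, whenever all previous terms lie in `(0,1)`,
`γ_n(θ) = (1+ε)(2^{n-1} - cos θ ∏_{j=1}^{n-1}(1+√(1-γ_j(θ)²)))/(L sin θ)`,
every `γ_n` tends to `0` as `θ → 0⁺`. -/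
theorem gamma_sequence_tendsto_zero
    (L ε : ℝ) (hL0 : 0 < L) (hL1 : L ≤ 1) (hε : 0 < ε)
    (g : ℕ → ℝ → ℝ)
    (h1 : ∀ θ ∈ Set.Ioc 0 (π / 4),
      g 1 θ = (1 + ε) * (1 - Real.cos θ) / (L * Real.sin θ))
    (hrec : ∀ n, 2 ≤ n → ∀ θ ∈ Set.Ioc 0 (π / 4),
      (∀ j, 1 ≤ j → j < n → g j θ ∈ Set.Ioo (0 : ℝ) 1) →
      g n θ = (1 + ε) *
        ((2 : ℝ) ^ (n - 1) -
          Real.cos θ * ∏ j ∈ Finset.Icc 1 (n - 1), (1 + Real.sqrt (1 - g j θ ^ 2))) /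
        (L * Real.sin θ)) :
    ∀ n, 1 ≤ n → Tendsto (g n) (nhdsWithin 0 (Set.Ioi 0)) (nhds 0) := by
  set l := nhdsWithin (0:ℝ) (Set.Ioi 0) with hl
  have hsin : Tendsto Real.sin l (nhds 0) := by
    have h := Real.continuous_sin.tendsto 0
    rw [Real.sin_zero] at h
    exact h.mono_left nhdsWithin_le_nhds
  have hIoc : ∀ᶠ θ in l, θ ∈ Set.Ioc 0 (π/4) := by
    have : Set.Ioc (0:ℝ) (π/4) ∈ l := Ioc_mem_nhdsGT (by positivity)
    exact Filter.eventually_of_mem this fun x hx => hx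
  -- basic facts on Ioc
  have hfacts : ∀ θ ∈ Set.Ioc (0:ℝ) (π/4), 0 < Real.sin θ ∧ Real.sin θ ≤ 1 ∧
      0 ≤ Real.cos θ ∧ Real.cos θ < 1 := by
    intro θ hθ
    have hπ := Real.pi_pos
    have hs : 0 < Real.sin θ := Real.sin_pos_of_pos_of_lt_pi hθ.1 (by linarith [hθ.2])
    have hc : 0 ≤ Real.cos θ := Real.cos_nonneg_of_mem_Icc ⟨by linarith [hθ.1], by linarith [hθ.2]⟩
    have hsq : Real.sin θ ^ 2 + Real.cos θ ^ 2 = 1 := Real.sin_sq_add_cos_sq θ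
    refine ⟨hs, Real.sin_le_one θ, hc, ?_⟩
    nlinarith
  -- Key uniform bound, by induction
  have key : ∀ m : ℕ, ∃ C : ℝ, 0 < C ∧ ∀ᶠ θ in l, θ ∈ Set.Ioc 0 (π/4) ∧
      C * Real.sin θ < 1 ∧ ∀ j ∈ Finset.Icc 1 m, 0 < g j θ ∧ g j θ ≤ C * Real.sin θ := by
    intro m
    induction m with
    | zero =>
      refine ⟨1, one_pos, ?_⟩
      have h2 : ∀ᶠ θ in l, Real.sin θ < 1 := hsin.eventually (gt_mem_nhds one_pos)
      filter_upwards [hIoc, h2] with θ hθ hs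
      exact ⟨hθ, by linarith, by simp⟩
    | succ n ih =>
      obtain ⟨C, hC0, hev⟩ := ih
      rcases Nat.eq_zero_or_pos n with hn0 | hn1
      · -- case m = 1
        subst hn0
        set C' : ℝ := max C ((1+ε)/L) with hC'def
        have hC'0 : 0 < C' := lt_of_lt_of_le hC0 (le_max_left _ _)
        refine ⟨C', hC'0, ?_⟩
        have h2 : ∀ᶠ θ in l, Real.sin θ < 1/C' :=
          hsin.eventually (gt_mem_nhds (by positivity))
        filter_upwards [hIoc, h2] with θ hθ hsC
        obtain ⟨hs, hs1, hc0, hc1⟩ := hfacts θ hθ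
        have hCs1 : C' * Real.sin θ < 1 := by
          rw [lt_div_iff₀ hC'0] at hsC; linarith [mul_comm C' (Real.sin θ)]
        refine ⟨hθ, hCs1, ?_⟩
        intro j hj
        simp only [Finset.mem_Icc] at hj
        have hj1 : j = 1 := by omega
        subst hj1
        rw [h1 θ hθ]
        have hden : 0 < L * Real.sin θ := by positivity
        constructor
        · apply div_pos (by nlinarith) hden
        · rw [div_le_iff₀ hden]
          have hC'L : (1+ε) ≤ C' * L := by
            rw [hC'def]
            have : (1+ε)/L ≤ max C ((1+ε)/L) := le_max_right _ _
            calc (1+ε) = (1+ε)/L * L := by field_simp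
            _ ≤ max C ((1+ε)/L) * L := by nlinarith
          have hsq : Real.sin θ ^ 2 + Real.cos θ ^ 2 = 1 := Real.sin_sq_add_cos_sq θ
          have hb2 : 1 - Real.cos θ ≤ Real.sin θ ^ 2 := by nlinarith
          nlinarith [hb2, mul_le_mul_of_nonneg_right hC'L (sq_nonneg (Real.sin θ))]
      · -- case m = n+1 ≥ 2
        set D : ℝ := (1+ε) * 2^n * (1 + n * C^2) / L with hDdef
        set C' : ℝ := max C D with hC'def
        have hD0 : 0 < D := by
          rw [hDdef]; positivity
        have hC'0 : 0 < C' := lt_of_lt_of_le hC0 (le_max_left _ _)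
        refine ⟨C', hC'0, ?_⟩
        have h2 : ∀ᶠ θ in l, Real.sin θ < 1/C' :=
          hsin.eventually (gt_mem_nhds (by positivity))
        filter_upwards [hev, h2] with θ hθev hsC
        obtain ⟨hθ, hCs1, hbnd⟩ := hθev
        obtain ⟨hs, hs1, hc0, hc1⟩ := hfacts θ hθ
        have hC's1 : C' * Real.sin θ < 1 := by
          rw [lt_div_iff₀ hC'0] at hsC; linarith [mul_comm C' (Real.sin θ)]
        refine ⟨hθ, hC's1, ?_⟩
        -- previous terms in (0,1)
        have hprev : ∀ j, 1 ≤ j → j < n+1 → g j θ ∈ Set.Ioo (0:ℝ) 1 := by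
          intro j hj1 hjn
          have hj : j ∈ Finset.Icc 1 n := Finset.mem_Icc.2 ⟨hj1, by omega⟩
          obtain ⟨hp, hb⟩ := hbnd j hj
          exact ⟨hp, lt_of_le_of_lt hb hCs1⟩
        have hform := hrec (n+1) (by omega) θ hθ hprev
        simp only [Nat.add_sub_cancel] at hform
        -- product bounds
        set T := Finset.Icc 1 n with hT
        set P := ∏ j ∈ T, (1 + Real.sqrt (1 - g j θ ^ 2)) with hP
        have hcard : T.card = n := by rw [hT, Nat.card_Icc]; omega
        have hfac1 : ∀ j ∈ T, (1:ℝ) ≤ 1 + Real.sqrt (1 - g j θ ^ 2) := by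
          intro j hj; nlinarith [Real.sqrt_nonneg (1 - g j θ ^ 2)]
        have hP0 : (0:ℝ) ≤ P := Finset.prod_nonneg fun j hj => by linarith [hfac1 j hj]
        have hPle : P ≤ 2^n := by
          calc P ≤ ∏ j ∈ T, (2:ℝ) := by
                apply Finset.prod_le_prod (fun j hj => by linarith [hfac1 j hj])
                intro j hj
                have : Real.sqrt (1 - g j θ ^ 2) ≤ 1 :=
                  Real.sqrt_le_one.mpr (by nlinarith [sq_nonneg (g j θ)])
                linarith
          _ = 2^n := by rw [Finset.prod_const, hcard]
        -- lower bound on P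
        have hgsq : ∀ j ∈ T, 0 ≤ g j θ ^ 2 ∧ g j θ ^ 2 ≤ 1 := by
          intro j hj
          obtain ⟨hp, hb⟩ := hbnd j hj
          have : g j θ < 1 := lt_of_le_of_lt hb hCs1
          constructor
          · positivity
          · nlinarith
        have hPge : (2:ℝ)^n * (1 - (∑ j ∈ T, g j θ ^ 2) / 2) ≤ P := by
          have step1 : ∀ j ∈ T, (2 - g j θ ^ 2) ≤ 1 + Real.sqrt (1 - g j θ ^ 2) := by
            intro j hj
            obtain ⟨h0, h1'⟩ := hgsq j hj
            have hmono := Real.sqrt_le_sqrt (show (1 - g j θ ^ 2)^2 ≤ 1 - g j θ ^ 2 by nlinarith)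
            rw [Real.sqrt_sq (by linarith : (0:ℝ) ≤ 1 - g j θ ^ 2)] at hmono
            linarith
          have step2 : ∏ j ∈ T, ((2:ℝ) - g j θ ^ 2) ≤ P := by
            apply Finset.prod_le_prod
            · intro j hj; obtain ⟨h0, h1'⟩ := hgsq j hj; linarith
            · exact step1
          have step3 : ∏ j ∈ T, ((2:ℝ) - g j θ ^ 2) = 2^n * ∏ j ∈ T, (1 - g j θ ^ 2 / 2) := by
            rw [← hcard, ← Finset.prod_const (2:ℝ), ← Finset.prod_mul_distrib]
            apply Finset.prod_congr rfl
            intro j hj; ring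
          have step4 : 1 - ∑ j ∈ T, g j θ ^ 2 / 2 ≤ ∏ j ∈ T, (1 - g j θ ^ 2 / 2) := by
            apply weier_aux
            intro j hj; obtain ⟨h0, h1'⟩ := hgsq j hj
            constructor <;> linarith
          have step5 : (∑ j ∈ T, g j θ ^ 2 / 2) = (∑ j ∈ T, g j θ ^ 2) / 2 := by
            rw [Finset.sum_div]
          calc (2:ℝ)^n * (1 - (∑ j ∈ T, g j θ ^ 2) / 2)
              = 2^n * (1 - ∑ j ∈ T, g j θ ^ 2 / 2) := by rw [step5]
            _ ≤ 2^n * ∏ j ∈ T, (1 - g j θ ^ 2 / 2) := by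
                apply mul_le_mul_of_nonneg_left step4 (by positivity)
            _ = ∏ j ∈ T, ((2:ℝ) - g j θ ^ 2) := step3.symm
            _ ≤ P := step2
        -- sum bound
        have hSle : (∑ j ∈ T, g j θ ^ 2) ≤ n * (C * Real.sin θ)^2 := by
          calc (∑ j ∈ T, g j θ ^ 2) ≤ ∑ _j ∈ T, (C * Real.sin θ)^2 := by
                apply Finset.sum_le_sum
                intro j hj
                obtain ⟨hp, hb⟩ := hbnd j hj
                nlinarith
          _ = n * (C * Real.sin θ)^2 := by
                rw [Finset.sum_const, hcard, nsmul_eq_mul]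
        have hS0 : (0:ℝ) ≤ ∑ j ∈ T, g j θ ^ 2 :=
          Finset.sum_nonneg fun j hj => (hgsq j hj).1
        -- finish
        intro j hj
        simp only [Finset.mem_Icc] at hj
        rcases Nat.lt_or_ge j (n+1) with hjlt | hjge
        · -- old index
          have hjT : j ∈ T := Finset.mem_Icc.2 ⟨hj.1, by omega⟩
          obtain ⟨hp, hb⟩ := hbnd j hjT
          refine ⟨hp, le_trans hb ?_⟩
          have : C ≤ C' := le_max_left _ _
          nlinarith
        · -- new index j = n+1
          have hjeq : j = n+1 := by omega
          subst hjeq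
          rw [hform]
          have hden : 0 < L * Real.sin θ := by positivity
          have h2n : (0:ℝ) < 2^n := by positivity
          have hnum : 0 < (2:ℝ)^n - Real.cos θ * P := by
            nlinarith [mul_le_mul_of_nonneg_left hPle hc0]
          constructor
          · exact div_pos (mul_pos (by linarith) hnum) hden
          · rw [div_le_iff₀ hden]
            have hDL : D * L = (1+ε) * 2^n * (1 + n * C^2) := by
              rw [hDdef]; field_simp
            have hDC' : D ≤ C' := le_max_right _ _
            have hsq : Real.sin θ ^ 2 + Real.cos θ ^ 2 = 1 := Real.sin_sq_add_cos_sq θ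
            set S := ∑ j ∈ T, g j θ ^ 2 with hSdef
            have hb1 : (2:ℝ)^n - Real.cos θ * P ≤
                2^n * (1 - Real.cos θ) + Real.cos θ * (2^n * (S/2)) := by
              nlinarith [mul_le_mul_of_nonneg_left hPge hc0]
            have hb2 : 1 - Real.cos θ ≤ Real.sin θ ^ 2 := by nlinarith
            have hS : S ≤ n * C^2 * Real.sin θ ^ 2 := by nlinarith [hSle]
            have hb3 : Real.cos θ * (2^n * (S/2)) ≤ 2^n * (n * C^2 * Real.sin θ ^ 2) := by
              have step : Real.cos θ * (2^n * (S/2)) ≤ 1 * (2^n * S) := by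
                nlinarith [mul_le_mul_of_nonneg_left hS0 h2n.le,
                  mul_le_mul_of_nonneg_right hc1.le (mul_nonneg h2n.le (by linarith : (0:ℝ) ≤ S/2))]
              have step2 : 2^n * S ≤ 2^n * (n * C^2 * Real.sin θ ^ 2) :=
                mul_le_mul_of_nonneg_left hS h2n.le
              linarith
            have hb4 : (2:ℝ)^n - Real.cos θ * P ≤ 2^n * (1 + n * C^2) * Real.sin θ ^ 2 := by
              have h5 : (2:ℝ)^n * (1 - Real.cos θ) ≤ 2^n * Real.sin θ ^ 2 :=
                mul_le_mul_of_nonneg_left hb2 h2n.le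
              have : (2:ℝ)^n * (1 + n * C^2) * Real.sin θ ^ 2
                  = 2^n * Real.sin θ ^ 2 + 2^n * (n * C^2 * Real.sin θ ^ 2) := by ring
              linarith
            have hC'L : D * L ≤ C' * L := mul_le_mul_of_nonneg_right hDC' hL0.le
            calc (1+ε) * ((2:ℝ)^n - Real.cos θ * P)
                ≤ (1+ε) * (2^n * (1 + n * C^2) * Real.sin θ ^ 2) :=
                  mul_le_mul_of_nonneg_left hb4 (by linarith)
              _ = D * L * Real.sin θ ^ 2 := by rw [hDL]; ring
              _ ≤ C' * L * Real.sin θ ^ 2 :=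
                  mul_le_mul_of_nonneg_right hC'L (sq_nonneg _)
              _ = C' * Real.sin θ * (L * Real.sin θ) := by ring
  -- conclude
  intro n hn
  obtain ⟨C, hC0, hev⟩ := key n
  have hmem : n ∈ Finset.Icc 1 n := Finset.mem_Icc.2 ⟨hn, le_refl n⟩
  apply squeeze_zero' (g := fun θ => C * Real.sin θ)
  · filter_upwards [hev] with θ ⟨_, _, hb⟩
    exact (hb n hmem).1.le
  · filter_upwards [hev] with θ ⟨_, _, hb⟩
    exact (hb n hmem).2
  · have := hsin.const_mul C
    simpa using this
end

section
/- Fix L ∈ (0,1] and ε > 0 and define γ_k(θ) recursively as above. For every n ∈ ℕ there exists θ_n ∈ (0, π/4] such that for all θ ∈ (0, θ_n) and all k ≤ n, γ_k(θ) < 1, and moreover 0 < γ₁(θ) < γ₂(θ) < ⋯ < γ_n(θ). -/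
open Real

private lemma prod_lower_aux (a : ℕ → ℝ) (s : Finset ℕ)
    (h : ∀ j ∈ s, 0 ≤ a j ∧ a j ≤ 2) :
    (2:ℝ) ^ s.card - ∏ j ∈ s, a j ≤ 2 ^ s.card * ∑ j ∈ s, (2 - a j) := by
  induction s using Finset.induction_on with
  | empty => simp
  | insert i s hi ih =>
    have hP0 : (0:ℝ) ≤ ∏ j ∈ s, a j :=
      Finset.prod_nonneg fun j hj => (h j (Finset.mem_insert_of_mem hj)).1
    have hP2 : ∏ j ∈ s, a j ≤ 2 ^ s.card := by
      calc ∏ j ∈ s, a j ≤ ∏ _j ∈ s, (2:ℝ) :=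
            Finset.prod_le_prod (fun j hj => (h j (Finset.mem_insert_of_mem hj)).1)
              (fun j hj => (h j (Finset.mem_insert_of_mem hj)).2)
        _ = 2 ^ s.card := by rw [Finset.prod_const]
    have ihs := ih (fun j hj => h j (Finset.mem_insert_of_mem hj))
    have hai := h i (Finset.mem_insert_self i s)
    rw [Finset.prod_insert hi, Finset.sum_insert hi, Finset.card_insert_of_notMem hi]
    have hpow : (0:ℝ) < 2 ^ s.card := by positivity
    have h2 : (2 - a i) * (∏ j ∈ s, a j) ≤ (2 - a i) * 2 ^ s.card :=
      mul_le_mul_of_nonneg_left hP2 (by linarith [hai.2])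
    have h3 : (0:ℝ) ≤ 2 ^ s.card * (2 - a i) := by nlinarith [hai.2]
    ring_nf
    nlinarith [ihs, h2, h3]

private lemma theta_facts {θ b : ℝ} (hθ : θ ∈ Set.Ioo (0:ℝ) b) (hb : b ≤ π / 4) :
    0 < Real.sin θ ∧ θ / 2 ≤ Real.sin θ ∧ 0 < Real.cos θ ∧ Real.cos θ < 1 ∧
      1 - Real.cos θ ≤ θ ^ 2 / 2 := by
  obtain ⟨hθ0, hθb⟩ := hθ
  have hpi : π ≤ 4 := Real.pi_le_four
  have hθ1 : θ ≤ 1 := by linarith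
  have hθpi : θ < π / 2 := by linarith [Real.pi_pos]
  refine ⟨Real.sin_pos_of_pos_of_lt_pi hθ0 (by linarith [Real.pi_pos]), ?_, ?_, ?_, ?_⟩
  · nlinarith [Real.sin_gt_sub_cube hθ0, sq_nonneg θ, hθ0]
  · exact Real.cos_pos_of_mem_Ioo ⟨by linarith [Real.pi_pos], hθpi⟩
  · have := Real.cos_lt_cos_of_nonneg_of_le_pi le_rfl (by linarith [Real.pi_pos] : θ ≤ π) hθ0
    simpa using this
  · linarith [Real.one_sub_sq_div_two_le_cos (x := θ)]

private lemma sqrt_facts {x : ℝ} (hx0 : 0 < x) (hx1 : x < 1) :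
    0 ≤ Real.sqrt (1 - x ^ 2) ∧ Real.sqrt (1 - x ^ 2) < 1 ∧
      1 - Real.sqrt (1 - x ^ 2) ≤ x ^ 2 := by
  have h0 : (0:ℝ) ≤ 1 - x ^ 2 := by nlinarith
  have hs := Real.sqrt_nonneg (1 - x ^ 2)
  have hsq : Real.sqrt (1 - x ^ 2) ^ 2 = 1 - x ^ 2 := Real.sq_sqrt h0
  constructor
  · exact hs
  constructor
  · nlinarith
  · nlinarith

/-- For the recursively defined family `γ_k(θ)`, for every `n` there exists
`θ_n ∈ (0, π/4]` such that for all `θ ∈ (0, θ_n)` all terms `γ_1(θ),…,γ_n(θ)`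
are `< 1`, and `0 < γ₁(θ) < γ₂(θ) < ⋯ < γ_n(θ)`. -/
theorem gamma_sequence_exists_theta
    (L ε : ℝ) (hL0 : 0 < L) (hL1 : L ≤ 1) (hε : 0 < ε)
    (g : ℕ → ℝ → ℝ)
    (h1 : ∀ θ ∈ Set.Ioc 0 (π / 4),
      g 1 θ = (1 + ε) * (1 - Real.cos θ) / (L * Real.sin θ))
    (hrec : ∀ n, 2 ≤ n → ∀ θ ∈ Set.Ioc 0 (π / 4),
      (∀ j, 1 ≤ j → j < n → g j θ ∈ Set.Ioo (0 : ℝ) 1) →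
      g n θ = (1 + ε) *
        ((2 : ℝ) ^ (n - 1) -
          Real.cos θ * ∏ j ∈ Finset.Icc 1 (n - 1), (1 + Real.sqrt (1 - g j θ ^ 2))) /
        (L * Real.sin θ)) :
    ∀ n, 1 ≤ n → ∃ θn ∈ Set.Ioc (0 : ℝ) (π / 4),
      ∀ θ ∈ Set.Ioo (0 : ℝ) θn,
        (∀ k, 1 ≤ k → k ≤ n → g k θ < 1) ∧
        0 < g 1 θ ∧
        (∀ k, 1 ≤ k → k < n → g k θ < g (k + 1) θ) := by
  have hε1 : (0:ℝ) < 1 + ε := by linarith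
  -- unified recursion formula, valid also for k = 1
  have hform : ∀ k : ℕ, ∀ θ ∈ Set.Ioc (0:ℝ) (π / 4),
      (∀ j, 1 ≤ j → j < k + 1 → g j θ ∈ Set.Ioo (0 : ℝ) 1) →
      g (k + 1) θ = (1 + ε) *
        ((2 : ℝ) ^ k -
          Real.cos θ * ∏ j ∈ Finset.Icc 1 k, (1 + Real.sqrt (1 - g j θ ^ 2))) /
        (L * Real.sin θ) := by
    intro k θ hθ hj
    rcases Nat.eq_zero_or_pos k with hk | hk
    · subst hk
      rw [h1 θ hθ]
      norm_num
    · have := hrec (k + 1) (by omega) θ hθ hj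
      simpa using this
  -- key claim with linear bound
  have key : ∀ n : ℕ, ∃ C : ℝ, 0 < C ∧ ∃ θn, θn ∈ Set.Ioc (0:ℝ) (π / 4) ∧
      ∀ θ ∈ Set.Ioo (0:ℝ) θn, ∀ k, 1 ≤ k → k ≤ n →
        (0 < g k θ ∧ g k θ < 1 ∧ g k θ ≤ C * θ) := by
    intro n
    induction n with
    | zero =>
      exact ⟨1, one_pos, π / 4, ⟨by positivity, le_rfl⟩, fun θ hθ k hk1 hk0 => by omega⟩
    | succ n ih =>
      obtain ⟨C, hC, θn, ⟨hθn0, hθnle⟩, hIH⟩ := ih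
      set K : ℝ := 2 ^ n * (1 / 2 + n * C ^ 2) with hKdef
      have hK : 0 < K := by positivity
      set C' : ℝ := max C (2 * (1 + ε) * K / L) with hC'def
      have hC'pos : 0 < C' := lt_of_lt_of_le hC (le_max_left _ _)
      refine ⟨C', hC'pos, min θn (1 / (C' + 1)), ⟨?_, ?_⟩, ?_⟩
      · exact lt_min hθn0 (by positivity)
      · exact le_trans (min_le_left _ _) hθnle
      intro θ hθ k hk1 hkn
      have hθ0 : 0 < θ := hθ.1
      have hθn' : θ < θn := lt_of_lt_of_le hθ.2 (min_le_left _ _)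
      have hθC : θ < 1 / (C' + 1) := lt_of_lt_of_le hθ.2 (min_le_right _ _)
      have hθmem : θ ∈ Set.Ioo (0:ℝ) θn := ⟨hθ0, hθn'⟩
      rcases Nat.lt_or_ge k (n + 1) with hk | hk
      · obtain ⟨ha, hb, hc⟩ := hIH θ hθmem k hk1 (by omega)
        exact ⟨ha, hb, le_trans hc (mul_le_mul_of_nonneg_right (le_max_left _ _) hθ0.le)⟩
      · -- k = n + 1
        have hkeq : k = n + 1 := by omega
        subst hkeq
        obtain ⟨hsin, hsin2, hcos0, hcos1, hcossq⟩ := theta_facts hθmem hθnle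
        have hθpi4 : θ ∈ Set.Ioc (0:ℝ) (π / 4) := ⟨hθ0, le_trans (le_of_lt hθn') hθnle⟩
        have hprev : ∀ j, 1 ≤ j → j < n + 1 → g j θ ∈ Set.Ioo (0 : ℝ) 1 := by
          intro j hj1 hj2
          obtain ⟨ha, hb, _⟩ := hIH θ hθmem j hj1 (by omega)
          exact ⟨ha, hb⟩
        have hf := hform n θ hθpi4 hprev
        set P : ℝ := ∏ j ∈ Finset.Icc 1 n, (1 + Real.sqrt (1 - g j θ ^ 2)) with hPdef
        have hcard : (Finset.Icc 1 n).card = n := by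
          rw [Nat.card_Icc]; omega
        have hfac : ∀ j ∈ Finset.Icc 1 n,
            0 ≤ 1 + Real.sqrt (1 - g j θ ^ 2) ∧ 1 + Real.sqrt (1 - g j θ ^ 2) ≤ 2 := by
          intro j hj
          rw [Finset.mem_Icc] at hj
          obtain ⟨ha, hb, _⟩ := hIH θ hθmem j hj.1 hj.2
          obtain ⟨h0, h1', _⟩ := sqrt_facts ha hb
          exact ⟨by linarith, by linarith⟩
        have hP0 : 0 < P := Finset.prod_pos fun j hj => by
          have := (hfac j hj).1
          positivity
        have hP2 : P ≤ 2 ^ n := by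
          have : P ≤ ∏ _j ∈ Finset.Icc 1 n, (2:ℝ) :=
            Finset.prod_le_prod (fun j hj => (hfac j hj).1) (fun j hj => (hfac j hj).2)
          rwa [Finset.prod_const, hcard] at this
        have hsum : ∑ j ∈ Finset.Icc 1 n, (2 - (1 + Real.sqrt (1 - g j θ ^ 2)))
            ≤ n * (C ^ 2 * θ ^ 2) := by
          have hterm : ∀ j ∈ Finset.Icc 1 n,
              2 - (1 + Real.sqrt (1 - g j θ ^ 2)) ≤ C ^ 2 * θ ^ 2 := by
            intro j hj
            rw [Finset.mem_Icc] at hj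
            obtain ⟨ha, hb, hc⟩ := hIH θ hθmem j hj.1 hj.2
            obtain ⟨_, _, h3⟩ := sqrt_facts ha hb
            have h4 : g j θ ^ 2 ≤ (C * θ) ^ 2 := pow_le_pow_left₀ ha.le hc 2
            have h5 : (C * θ) ^ 2 = C ^ 2 * θ ^ 2 := by ring
            linarith
          calc ∑ j ∈ Finset.Icc 1 n, (2 - (1 + Real.sqrt (1 - g j θ ^ 2)))
              ≤ ∑ _j ∈ Finset.Icc 1 n, (C ^ 2 * θ ^ 2) := Finset.sum_le_sum hterm
            _ = n * (C ^ 2 * θ ^ 2) := by rw [Finset.sum_const, hcard]; simp [mul_comm]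
        have hprodlow : (2:ℝ) ^ n - P ≤ 2 ^ n * (n * (C ^ 2 * θ ^ 2)) := by
          have := prod_lower_aux (fun j => 1 + Real.sqrt (1 - g j θ ^ 2))
            (Finset.Icc 1 n) hfac
          rw [hcard] at this
          have hpow : (0:ℝ) < 2 ^ n := by positivity
          have h6 := mul_le_mul_of_nonneg_left hsum hpow.le
          linarith
        have hPle : P - 2 ^ n ≤ 0 := by linarith
        have hnum_pos : 0 < (2:ℝ) ^ n - Real.cos θ * P := by
          have h := mul_lt_mul_of_pos_right hcos1 hP0
          rw [one_mul] at h
          linarith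
        have hnum_le : (2:ℝ) ^ n - Real.cos θ * P ≤ K * θ ^ 2 := by
          have e1 : (2:ℝ) ^ n - Real.cos θ * P
              = 2 ^ n * (1 - Real.cos θ) + Real.cos θ * (2 ^ n - P) := by ring
          have e2 : Real.cos θ * ((2:ℝ) ^ n - P) ≤ 1 * ((2:ℝ) ^ n - P) :=
            mul_le_mul_of_nonneg_right hcos1.le (by linarith)
          rw [one_mul] at e2
          have hpow : (0:ℝ) < 2 ^ n := by positivity
          have e4 := mul_le_mul_of_nonneg_left hcossq hpow.le
          have e3 : K * θ ^ 2 = 2 ^ n * (θ ^ 2 / 2) + 2 ^ n * (↑n * (C ^ 2 * θ ^ 2)) := by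
            rw [hKdef]; ring
          rw [e1]
          linarith
        have hgpos : 0 < g (n + 1) θ := by
          rw [hf]
          exact div_pos (mul_pos hε1 hnum_pos) (mul_pos hL0 hsin)
        have hbound : g (n + 1) θ ≤ 2 * (1 + ε) * K / L * θ := by
          rw [hf]
          have hd1 : 0 < L * (θ / 2) := by positivity
          have hd2 : L * (θ / 2) ≤ L * Real.sin θ :=
            mul_le_mul_of_nonneg_left hsin2 hL0.le
          have hnum2 : (1 + ε) * ((2:ℝ) ^ n - Real.cos θ * P) ≤ (1 + ε) * (K * θ ^ 2) :=
            mul_le_mul_of_nonneg_left hnum_le hε1.le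
          calc (1 + ε) * ((2:ℝ) ^ n - Real.cos θ * P) / (L * Real.sin θ)
              ≤ (1 + ε) * (K * θ ^ 2) / (L * (θ / 2)) :=
                div_le_div₀ (by positivity) hnum2 hd1 hd2
            _ = 2 * (1 + ε) * K / L * θ := by
                field_simp
        have hboundC' : g (n + 1) θ ≤ C' * θ :=
          le_trans hbound (mul_le_mul_of_nonneg_right (le_max_right _ _) hθ0.le)
        refine ⟨hgpos, ?_, hboundC'⟩
        have : C' * θ < C' * (1 / (C' + 1)) := mul_lt_mul_of_pos_left hθC hC'pos
        have h2 : C' * (1 / (C' + 1)) < 1 := by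
          rw [mul_one_div, div_lt_one (by positivity)]
          linarith
        linarith
  -- deduce the theorem
  intro n hn
  obtain ⟨C, hC, θn, ⟨hθn0, hθnle⟩, hkey⟩ := key n
  refine ⟨θn, ⟨hθn0, hθnle⟩, ?_⟩
  intro θ hθ
  have hθ0 : 0 < θ := hθ.1
  obtain ⟨hsin, hsin2, hcos0, hcos1, hcossq⟩ := theta_facts hθ hθnle
  have hθpi4 : θ ∈ Set.Ioc (0:ℝ) (π / 4) := ⟨hθ0, le_trans hθ.2.le hθnle⟩
  refine ⟨fun k hk1 hkn => (hkey θ hθ k hk1 hkn).2.1, (hkey θ hθ 1 le_rfl hn).1, ?_⟩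
  intro k hk1 hkn
  obtain ⟨m, rfl⟩ : ∃ m, k = m + 1 := ⟨k - 1, by omega⟩
  have hprev1 : ∀ j, 1 ≤ j → j < m + 1 → g j θ ∈ Set.Ioo (0 : ℝ) 1 := by
    intro j hj1 hj2
    obtain ⟨ha, hb, _⟩ := hkey θ hθ j hj1 (by omega)
    exact ⟨ha, hb⟩
  have hprev2 : ∀ j, 1 ≤ j → j < m + 2 → g j θ ∈ Set.Ioo (0 : ℝ) 1 := by
    intro j hj1 hj2
    obtain ⟨ha, hb, _⟩ := hkey θ hθ j hj1 (by omega)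
    exact ⟨ha, hb⟩
  have hf1 := hform m θ hθpi4 hprev1
  have hf2 := hform (m + 1) θ hθpi4 hprev2
  set Q : ℝ := ∏ j ∈ Finset.Icc 1 m, (1 + Real.sqrt (1 - g j θ ^ 2)) with hQdef
  have hsplit : ∏ j ∈ Finset.Icc 1 (m + 1), (1 + Real.sqrt (1 - g j θ ^ 2))
      = Q * (1 + Real.sqrt (1 - g (m + 1) θ ^ 2)) := by
    rw [hQdef, Finset.prod_Icc_succ_top (by omega)]
  have hcard : (Finset.Icc 1 m).card = m := by rw [Nat.card_Icc]; omega
  have hfac : ∀ j ∈ Finset.Icc 1 m,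
      0 ≤ 1 + Real.sqrt (1 - g j θ ^ 2) ∧ 1 + Real.sqrt (1 - g j θ ^ 2) ≤ 2 := by
    intro j hj
    rw [Finset.mem_Icc] at hj
    obtain ⟨ha, hb, _⟩ := hkey θ hθ j hj.1 (by omega)
    obtain ⟨h0, h1', _⟩ := sqrt_facts ha hb
    exact ⟨by linarith, by linarith⟩
  have hQ0 : 0 < Q := Finset.prod_pos fun j hj => by
    have := (hfac j hj).1
    positivity
  have hQ2 : Q ≤ 2 ^ m := by
    have : Q ≤ ∏ _j ∈ Finset.Icc 1 m, (2:ℝ) :=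
      Finset.prod_le_prod (fun j hj => (hfac j hj).1) (fun j hj => (hfac j hj).2)
    rwa [Finset.prod_const, hcard] at this
  obtain ⟨hgm0, hgm1, _⟩ := hkey θ hθ (m + 1) (by omega) (by omega)
  obtain ⟨hs0, hs1, _⟩ := sqrt_facts hgm0 hgm1
  set s : ℝ := Real.sqrt (1 - g (m + 1) θ ^ 2) with hsdef
  rw [hf1, hf2, hsplit]
  rw [div_lt_div_iff_of_pos_right (mul_pos hL0 hsin)]
  have hQs : Real.cos θ * (Q * s) < 2 ^ m := by
    have h1' : Q * s < Q * 1 := mul_lt_mul_of_pos_left hs1 hQ0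
    rw [mul_one] at h1'
    have h2' : Real.cos θ * (Q * s) ≤ 1 * (Q * s) :=
      mul_le_mul_of_nonneg_right hcos1.le (mul_nonneg hQ0.le hs0)
    rw [one_mul] at h2'
    linarith
  have hin : (2:ℝ) ^ m - Real.cos θ * Q < 2 ^ (m + 1) - Real.cos θ * (Q * (1 + s)) := by
    have hr : (2:ℝ) ^ (m + 1) - Real.cos θ * (Q * (1 + s)) - ((2:ℝ) ^ m - Real.cos θ * Q)
        = 2 ^ m - Real.cos θ * (Q * s) := by ring
    linarith
  exact mul_lt_mul_of_pos_left hin hε1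
end

section
/- Let ε > 0 and α satisfy sin²(2α) = 8/9, and define γ₁(θ) = (1+ε)(2/(sin 2α (cos θ + sin θ)) - 1) and γ₂(θ) = (1+ε)(4/(sin 2α (cos θ + sin θ)) - (1+√(1-γ₁(θ)²))) when γ₁(θ) ∈ (0,1). Then for all θ ∈ (0, π/4], γ₁(θ) ≥ 1/2, and consequently γ₂(θ) > 2γ₁(θ) ≥ 1, so γ₂(θ) ∉ (0,1). -/
open Real

/-- For `ε > 0` and `sin²(2α) = 8/9` (with `sin 2α > 0`), the first Svetlichny
sharpness `γ₁(θ) = (1+ε)(2/(sin 2α (cos θ + sin θ)) - 1)` satisfies `γ₁(θ) ≥ 1/2`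
for all `θ ∈ (0, π/4]`; consequently, if `γ₁(θ) ∈ (0,1)` then
`γ₂(θ) = (1+ε)(4/(sin 2α (cos θ + sin θ)) - (1+√(1-γ₁(θ)²)))` satisfies
`γ₂(θ) > 2γ₁(θ) ≥ 1`, so `γ₂(θ) ∉ (0,1)`. -/
theorem second_charlie_fails_at_eight_ninths
    (ε α : ℝ) (hε : 0 < ε)
    (hsin : Real.sin (2 * α) ^ 2 = 8 / 9) (hpos : 0 < Real.sin (2 * α)) :
    ∀ θ ∈ Set.Ioc (0 : ℝ) (π / 4),
      (1 / 2 : ℝ) ≤ (1 + ε) * (2 / (Real.sin (2 * α) * (Real.cos θ + Real.sin θ)) - 1) ∧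
      ((1 + ε) * (2 / (Real.sin (2 * α) * (Real.cos θ + Real.sin θ)) - 1)
          ∈ Set.Ioo (0 : ℝ) 1 →
        (1 + ε) * (4 / (Real.sin (2 * α) * (Real.cos θ + Real.sin θ)) -
            (1 + Real.sqrt (1 -
              ((1 + ε) * (2 / (Real.sin (2 * α) * (Real.cos θ + Real.sin θ)) - 1)) ^ 2)))
          > 2 * ((1 + ε) * (2 / (Real.sin (2 * α) * (Real.cos θ + Real.sin θ)) - 1)) ∧
        (1 + ε) * (4 / (Real.sin (2 * α) * (Real.cos θ + Real.sin θ)) -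
            (1 + Real.sqrt (1 -
              ((1 + ε) * (2 / (Real.sin (2 * α) * (Real.cos θ + Real.sin θ)) - 1)) ^ 2)))
          ∉ Set.Ioo (0 : ℝ) 1) := by
  intro θ ⟨hθ0, hθ4⟩
  have hπ := Real.pi_pos
  have hc : 0 < Real.cos θ := Real.cos_pos_of_mem_Ioo ⟨by linarith, by linarith⟩
  have hsθ : 0 < Real.sin θ := Real.sin_pos_of_pos_of_lt_pi hθ0 (by linarith)
  set p := Real.cos θ + Real.sin θ with hp
  have hppos : 0 < p := by positivity
  have hp2 : p ^ 2 ≤ 2 := by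
    have := Real.sin_sq_add_cos_sq θ
    nlinarith [sq_nonneg (Real.sin θ - Real.cos θ)]
  set s := Real.sin (2 * α) with hs
  have hsp : 0 < s * p := mul_pos hpos hppos
  have hsp43 : s * p ≤ 4 / 3 := by nlinarith
  have hg1 : (3 / 2 : ℝ) ≤ 2 / (s * p) := by
    rw [le_div_iff₀ hsp]; linarith
  have hg1' : (1 / 2 : ℝ) ≤ (1 + ε) * (2 / (s * p) - 1) := by nlinarith
  refine ⟨hg1', ?_⟩
  rintro ⟨h0, h1⟩
  set g := (1 + ε) * (2 / (s * p) - 1) with hg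
  have hsqrt : Real.sqrt (1 - g ^ 2) < 1 := by
    rw [Real.sqrt_lt' one_pos]; nlinarith
  have hkey : (1 + ε) * (4 / (s * p) - (1 + Real.sqrt (1 - g ^ 2))) > 2 * g := by
    have : 2 * g = (1 + ε) * (4 / (s * p) - 2) := by ring
    rw [this]
    apply mul_lt_mul_of_pos_left _ (by linarith)
    linarith
  exact ⟨hkey, fun ⟨_, hlt⟩ => by linarith⟩
end

section
/- If γ_{j-1}, γ_j ∈ (0,1) satisfy the Svetlichny recursion γ_j = (1+ε)(2^j/c - ∏_{i=1}^{j-1}(1+√(1-γ_i²))) with c = sin 2α (cos θ + sin θ) > 0 and ε > 0, and each factor satisfies 1 < 1+√(1-γ_i²) < 2, then γ_j/γ_{j-1} > 2. -/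
open Real

/-- If `γ_{j-1}, γ_j ∈ (0,1)` satisfy the Svetlichny recursion
`γ_m = (1+ε)(2^m/c - ∏_{i=1}^{m-1}(1+√(1-γ_i²)))` with
`c = sin 2α (cos θ + sin θ) > 0`, `ε > 0`, and each factor satisfies
`1 < 1+√(1-γ_i²) < 2`, then `γ_j/γ_{j-1} > 2`. -/
theorem svetlichny_ratio_gt_two
    (ε α θ c : ℝ) (hε : 0 < ε)
    (hc : c = Real.sin (2 * α) * (Real.cos θ + Real.sin θ)) (hcpos : 0 < c)
    (γ : ℕ → ℝ) (j : ℕ) (hj : 2 ≤ j)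
    (hprev : γ (j - 1) ∈ Set.Ioo (0 : ℝ) 1) (hcur : γ j ∈ Set.Ioo (0 : ℝ) 1)
    (hrecj : γ j = (1 + ε) * ((2 : ℝ) ^ j / c -
      ∏ i ∈ Finset.Icc 1 (j - 1), (1 + Real.sqrt (1 - γ i ^ 2))))
    (hrecj1 : γ (j - 1) = (1 + ε) * ((2 : ℝ) ^ (j - 1) / c -
      ∏ i ∈ Finset.Icc 1 (j - 2), (1 + Real.sqrt (1 - γ i ^ 2))))
    (hfac : ∀ i, 1 ≤ i → i ≤ j - 1 →
      1 < 1 + Real.sqrt (1 - γ i ^ 2) ∧ 1 + Real.sqrt (1 - γ i ^ 2) < 2) :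
    γ j / γ (j - 1) > 2 := by
  obtain ⟨k, rfl⟩ : ∃ k, j = k + 2 := ⟨j - 2, by omega⟩
  have h1 : k + 2 - 1 = k + 1 := by omega
  have h2 : k + 2 - 2 = k := rfl
  rw [h1] at hprev hrecj1 ⊢
  norm_num at hrecj1
  set P := ∏ i ∈ Finset.Icc 1 k, (1 + Real.sqrt (1 - γ i ^ 2)) with hP
  have hsplit : ∏ i ∈ Finset.Icc 1 (k + 2 - 1), (1 + Real.sqrt (1 - γ i ^ 2))
      = P * (1 + Real.sqrt (1 - γ (k + 1) ^ 2)) := by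
    rw [h1, Finset.prod_Icc_succ_top (by omega)]
  have hPpos : 0 < P := by
    apply Finset.prod_pos
    intro i hi
    simp only [Finset.mem_Icc] at hi
    linarith [(hfac i hi.1 (by omega)).1]
  have hflt : 1 + Real.sqrt (1 - γ (k + 1) ^ 2) < 2 :=
    (hfac (k + 1) (by omega) (by omega)).2
  have hεpos : (0 : ℝ) < 1 + ε := by linarith
  have hpow : (2 : ℝ) ^ (k + 2) = 2 * (2 : ℝ) ^ (k + 1) := by ring
  have key : γ (k + 2) > 2 * γ (k + 1) := by
    rw [hrecj, hrecj1, hsplit, hpow]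
    have h3 : P * (1 + Real.sqrt (1 - γ (k + 1) ^ 2)) < 2 * P := by nlinarith
    have h4 := mul_lt_mul_of_pos_left h3 hεpos
    have h5 : 2 * (2:ℝ) ^ (k + 1) / c = 2 * ((2:ℝ) ^ (k + 1) / c) := by ring
    rw [h5]
    nlinarith [h4]
  rw [gt_iff_lt, lt_div_iff₀ hprev.1]
  linarith
end
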